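/- arXiv:2010.09267 — 6 statements merged into one kernel-verified Lean document; each statement's English description precedes it below -/
import Mathlib

section
/- For any vector of nonnegative weights w_1,...,w_m summing to m, the q-Wasserstein distance between the empirical measure (1/n)∑δ_{X_i} and the weighted empirical measure (1/m)∑ w_j δ_{X'_j} is bounded below by ((1/n)∑_{i=1}^n |X_i − NN(X_i)|^q)^{1/q}. Consequently the 1-NN weight vector is optimal: it minimizes W_q over all admissible weight vectors, simultaneously for all q ≥ 1. -/
open MeasureTheory Metric
open scoped ENNReal BigOperators

/-- The `q`-Wasserstein distance, defined as the infimum over couplings. -/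
noncomputable def Wdist {E : Type*} [NormedAddCommGroup E] [MeasurableSpace E]
    (q : ℝ) (μ ν : Measure E) : ℝ :=
  sInf {c : ℝ | ∃ γ : Measure (E × E), IsProbabilityMeasure γ ∧
    γ.map Prod.fst = μ ∧ γ.map Prod.snd = ν ∧
    c = (∫ p, ‖p.1 - p.2‖ ^ q ∂γ) ^ (1 / q)}

/-- Empirical measure `(1/n) ∑ δ_{X i}`. -/
noncomputable def empMeas {E : Type*} [MeasurableSpace E] {n : ℕ} (X : Fin n → E) : Measure E :=
  (n : ℝ≥0∞)⁻¹ • ∑ i, Measure.dirac (X i)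

/-- Weighted empirical measure `(1/m) ∑ w j • δ_{X' j}`. -/
noncomputable def wEmpMeas {E : Type*} [MeasurableSpace E] {m : ℕ}
    (w : Fin m → ℝ) (X' : Fin m → E) : Measure E :=
  (m : ℝ≥0∞)⁻¹ • ∑ j, ENNReal.ofReal (w j) • Measure.dirac (X' j)

section helpers
variable {α : Type*} [MeasurableSpace α] {n m : ℕ}

lemma empMeas_apply (P : Fin n → α) {s : Set α} (hs : MeasurableSet s) :
    empMeas P s = (n : ℝ≥0∞)⁻¹ * ∑ i, s.indicator (1 : α → ℝ≥0∞) (P i) := by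
  simp [empMeas, Measure.finset_sum_apply, Measure.dirac_apply' _ hs]

lemma wEmpMeas_apply (w : Fin m → ℝ) (P : Fin m → α) {s : Set α} (hs : MeasurableSet s) :
    wEmpMeas w P s
      = (m : ℝ≥0∞)⁻¹ * ∑ j, ENNReal.ofReal (w j) * s.indicator (1 : α → ℝ≥0∞) (P j) := by
  simp [wEmpMeas, Measure.finset_sum_apply, Measure.dirac_apply' _ hs]

lemma empMeas_prob (hn : 0 < n) (P : Fin n → α) : IsProbabilityMeasure (empMeas P) := by
  constructor
  rw [empMeas_apply P MeasurableSet.univ]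
  simp [Set.indicator_univ, ENNReal.inv_mul_cancel (by exact_mod_cast hn.ne' : (n:ℝ≥0∞) ≠ 0)
    (by simp : (n:ℝ≥0∞) ≠ ⊤)]

lemma wEmpMeas_prob (hm : 0 < m) (w : Fin m → ℝ) (hw : ∀ j, 0 ≤ w j)
    (hsum : (∑ j, w j) = m) (P : Fin m → α) : IsProbabilityMeasure (wEmpMeas w P) := by
  constructor
  rw [wEmpMeas_apply w P MeasurableSet.univ]
  simp only [Set.indicator_univ, Pi.one_apply, mul_one]
  rw [← ENNReal.ofReal_sum_of_nonneg (fun j _ => hw j), hsum, ENNReal.ofReal_natCast,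
    ENNReal.inv_mul_cancel (by exact_mod_cast hm.ne' : (m:ℝ≥0∞) ≠ 0) (by simp)]

lemma empMeas_compl_range (P : Fin n → α) (h : MeasurableSet (Set.range P)ᶜ) :
    empMeas P (Set.range P)ᶜ = 0 := by
  rw [empMeas_apply P h]
  have : ∀ i, ((Set.range P)ᶜ).indicator (1 : α → ℝ≥0∞) (P i) = 0 := fun i => by
    simp [Set.indicator_apply, Set.mem_range_self]
  simp [this]

lemma wEmpMeas_compl_range (w : Fin m → ℝ) (P : Fin m → α) (h : MeasurableSet (Set.range P)ᶜ) :
    wEmpMeas w P (Set.range P)ᶜ = 0 := by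
  rw [wEmpMeas_apply w P h]
  have : ∀ j, ((Set.range P)ᶜ).indicator (1 : α → ℝ≥0∞) (P j) = 0 := fun j => by
    simp [Set.indicator_apply, Set.mem_range_self]
  simp [this]

lemma integral_empMeas [MeasurableSingletonClass α] (P : Fin n → α) (h : α → ℝ) :
    ∫ x, h x ∂(empMeas P) = (1 / n : ℝ) * ∑ i, h (P i) := by
  rw [empMeas, integral_smul_measure,
    integral_finset_sum_measure (fun i _ => (integrable_const (h (P i))).congr (ae_eq_dirac h).symm)]
  simp [integral_dirac, ENNReal.toReal_inv, smul_eq_mul, one_div]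

lemma map_empMeas {β : Type*} [MeasurableSpace β] (P : Fin n → α) {g : α → β}
    (hg : Measurable g) :
    (empMeas P).map g = empMeas (fun i => g (P i)) := by
  ext s hs
  rw [Measure.map_apply hg hs, empMeas_apply P (hg hs), empMeas_apply _ hs]
  exact congrArg _ (Finset.sum_congr rfl fun i _ => by
    by_cases h : g (P i) ∈ s <;> simp [Set.indicator_apply, h])

lemma empMeas_NN (hn : 0 < n) (hm : 0 < m)
    (X' : Fin m → α) (NN : Fin n → Fin m) (wNN : Fin m → ℝ)
    (hwNN : ∀ j, wNN j = (m : ℝ) / n * ((Finset.univ.filter fun i => NN i = j).card : ℝ)) :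
    empMeas (fun i => X' (NN i)) = wEmpMeas wNN X' := by
  have hm0 : (m : ℝ≥0∞) ≠ 0 := by exact_mod_cast hm.ne'
  ext s hs
  rw [empMeas_apply _ hs, wEmpMeas_apply wNN X' hs]
  have key : ∑ i, s.indicator (1 : α → ℝ≥0∞) (X' (NN i))
      = ∑ j, ((Finset.univ.filter fun i => NN i = j).card : ℝ≥0∞)
          * s.indicator (1 : α → ℝ≥0∞) (X' j) := by
    rw [← Finset.sum_fiberwise Finset.univ NN (fun i => s.indicator (1 : α → ℝ≥0∞) (X' (NN i)))]
    refine Finset.sum_congr rfl fun j _ => ?_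
    rw [Finset.sum_congr rfl (fun i hi => by
      rw [(Finset.mem_filter.mp hi).2]), Finset.sum_const, nsmul_eq_mul]
  rw [key, Finset.mul_sum, Finset.mul_sum]
  refine Finset.sum_congr rfl fun j _ => ?_
  rw [hwNN j]
  rw [ENNReal.ofReal_mul (by positivity), ENNReal.ofReal_natCast]
  rw [ENNReal.ofReal_div_of_pos (by exact_mod_cast hn), ENNReal.ofReal_natCast,
    ENNReal.ofReal_natCast]
  rw [← mul_assoc, ← mul_assoc, ← mul_assoc]
  congr 2
  rw [div_eq_mul_inv, ← mul_assoc, ENNReal.inv_mul_cancel hm0 (by simp), one_mul]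

lemma measurable_indicator_finite {α : Type*} [MeasurableSpace α] [MeasurableSingletonClass α]
    {s : Set α} (hs : s.Finite) (g : α → ℝ) : Measurable (s.indicator g) := by
  classical
  have heq : s.indicator g = fun x => ∑ a ∈ hs.toFinset, if x = a then g a else 0 := by
    funext x
    by_cases hx : x ∈ s
    · rw [Set.indicator_of_mem hx, Finset.sum_ite_eq hs.toFinset x g,
        if_pos (hs.mem_toFinset.mpr hx)]
    · rw [Set.indicator_of_notMem hx, Finset.sum_ite_eq hs.toFinset x g,
        if_neg (fun h => hx (hs.mem_toFinset.mp h))]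
  rw [heq]
  exact Finset.measurable_sum _ fun a _ =>
    Measurable.ite (MeasurableSet.singleton a) measurable_const measurable_const

end helpers

/-- Lower bound by the 1-NN cost, and optimality of the 1-NN weight vector,
simultaneously for all `q ≥ 1`. -/
theorem stmt1 {E : Type*} [NormedAddCommGroup E] [NormedSpace ℝ E]
    [MeasurableSpace E] [BorelSpace E]
    {n m : ℕ} (hn : 0 < n) (hm : 0 < m)
    (X : Fin n → E) (X' : Fin m → E)
    (NN : Fin n → Fin m)
    (hNN : ∀ i j, ‖X i - X' (NN i)‖ ≤ ‖X i - X' j‖)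
    (wNN : Fin m → ℝ)
    (hwNN : ∀ j, wNN j = (m : ℝ) / n * ((Finset.univ.filter fun i => NN i = j).card : ℝ)) :
    ∀ q : ℝ, 1 ≤ q →
      ∀ w : Fin m → ℝ, (∀ j, 0 ≤ w j) → (∑ j, w j) = m →
        ((1 / n : ℝ) * ∑ i, ‖X i - X' (NN i)‖ ^ q) ^ (1 / q)
            ≤ Wdist q (empMeas X) (wEmpMeas w X')
        ∧ Wdist q (empMeas X) (wEmpMeas wNN X')
            ≤ Wdist q (empMeas X) (wEmpMeas w X') := by
  intro q hq w hw hsum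
  have hq0 : 0 < q := lt_of_lt_of_le one_pos hq
  haveI : Nonempty (Fin m) := ⟨⟨0, hm⟩⟩
  haveI : Nonempty (Fin n) := ⟨⟨0, hn⟩⟩
  have hmne : (Finset.univ : Finset (Fin m)).Nonempty := Finset.univ_nonempty
  haveI hμ : IsProbabilityMeasure (empMeas X) := empMeas_prob hn X
  haveI hν : IsProbabilityMeasure (wEmpMeas w X') := wEmpMeas_prob hm w hw hsum X'
  set g : E × E → ℝ := fun p => ‖p.1 - p.2‖ ^ q with hgdef
  have hgcont : Continuous g :=
    ((continuous_fst.sub continuous_snd).norm).rpow_const fun _ => Or.inr hq0.le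
  set f : E → ℝ := fun x => Finset.univ.inf' hmne (fun j => ‖x - X' j‖) with hfdef
  have hfcont : Continuous f :=
    Continuous.finset_inf'_apply hmne fun j _ => (continuous_id.sub continuous_const).norm
  have hfnonneg : ∀ x, 0 ≤ f x := fun x => Finset.le_inf' hmne _ fun j _ => norm_nonneg _
  have hfle : ∀ x j, f x ≤ ‖x - X' j‖ := fun x j => Finset.inf'_le _ (Finset.mem_univ j)
  have hfX : ∀ i, f (X i) = ‖X i - X' (NN i)‖ := fun i =>
    le_antisymm (hfle _ _) (Finset.le_inf' _ _ fun j _ => hNN i j)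
  set g0 : E → ℝ := fun x => f x ^ q with hg0def
  have hg0cont : Continuous g0 := hfcont.rpow_const fun _ => Or.inr hq0.le
  set c0 : ℝ := (1 / n : ℝ) * ∑ i, ‖X i - X' (NN i)‖ ^ q with hc0def
  have hc0nonneg : 0 ≤ c0 := by
    apply mul_nonneg (by positivity)
    exact Finset.sum_nonneg fun i _ => Real.rpow_nonneg (norm_nonneg _) q
  have hmr : MeasurableSet (Set.range X) := (Set.finite_range X).measurableSet
  have hmr' : MeasurableSet (Set.range X') := (Set.finite_range X').measurableSet
  set C : ℝ := Finset.univ.sup' Finset.univ_nonempty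
    (fun ij : Fin n × Fin m => ‖X ij.1 - X' ij.2‖ ^ q) with hCdef
  -- key lower bound for any coupling
  have keybound : ∀ γ : Measure (E × E), IsProbabilityMeasure γ →
      γ.map Prod.fst = empMeas X → (γ.map Prod.snd) (Set.range X')ᶜ = 0 →
      c0 ≤ ∫ p, g p ∂γ := by
    intro γ hγ hfst hsnd0
    have hae1 : ∀ᵐ p ∂γ, p.1 ∈ Set.range X := by
      rw [ae_iff]
      have : γ (Prod.fst ⁻¹' (Set.range X)ᶜ) = 0 := by
        rw [← Measure.map_apply measurable_fst hmr.compl, hfst]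
        exact empMeas_compl_range X hmr.compl
      exact this
    have hae2 : ∀ᵐ p ∂γ, p.2 ∈ Set.range X' := by
      rw [ae_iff]
      have : γ (Prod.snd ⁻¹' (Set.range X')ᶜ) = 0 := by
        rw [← Measure.map_apply measurable_snd hmr'.compl]
        exact hsnd0
      exact this
    have hboundg : ∀ᵐ p ∂γ, ‖g p‖ ≤ C := by
      filter_upwards [hae1, hae2] with p h1 h2
      obtain ⟨i, hi⟩ := h1
      obtain ⟨j, hj⟩ := h2
      rw [Real.norm_of_nonneg (Real.rpow_nonneg (norm_nonneg _) q), ← hi, ← hj]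
      exact Finset.le_sup' (fun ij : Fin n × Fin m => ‖X ij.1 - X' ij.2‖ ^ q) (Finset.mem_univ (i, j))
    have hboundg0 : ∀ᵐ p ∂γ, ‖g0 p.1‖ ≤ C := by
      filter_upwards [hae1] with p h1
      obtain ⟨i, hi⟩ := h1
      rw [Real.norm_of_nonneg (Real.rpow_nonneg (hfnonneg _) q), ← hi, hfX i]
      exact Finset.le_sup' (fun ij : Fin n × Fin m => ‖X ij.1 - X' ij.2‖ ^ q) (Finset.mem_univ (i, NN i))
    have haeS : ∀ᵐ p ∂γ, p ∈ Set.range X ×ˢ Set.range X' := by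
      filter_upwards [hae1, hae2] with p h1 h2 using ⟨h1, h2⟩
    have hSfin : (Set.range X ×ˢ Set.range X').Finite :=
      (Set.finite_range X).prod (Set.finite_range X')
    have haesm : ∀ h : E × E → ℝ, AEStronglyMeasurable h γ := by
      intro h
      refine ⟨(Set.range X ×ˢ Set.range X').indicator h,
        (measurable_indicator_finite hSfin h).stronglyMeasurable, ?_⟩
      filter_upwards [haeS] with p hp using (Set.indicator_of_mem hp h).symm
    have hintg : Integrable g γ := (integrable_const C).mono' (haesm g) hboundg
    have hintg0 : Integrable (fun p : E × E => g0 p.1) γ :=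
      (integrable_const C).mono' (haesm _) hboundg0
    have hmono : ∀ᵐ p ∂γ, g0 p.1 ≤ g p := by
      filter_upwards [hae2] with p h2
      obtain ⟨j, hj⟩ := h2
      exact Real.rpow_le_rpow (hfnonneg _) (hj ▸ hfle p.1 j) hq0.le
    have h1 : ∫ p, g0 p.1 ∂γ ≤ ∫ p, g p ∂γ := integral_mono_ae hintg0 hintg hmono
    have h2 : ∫ p, g0 p.1 ∂γ = ∫ x, g0 x ∂(empMeas X) := by
      rw [← hfst, integral_map measurable_fst.aemeasurable hg0cont.aestronglyMeasurable]
    have h3 : ∫ x, g0 x ∂(empMeas X) = c0 := by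
      rw [integral_empMeas X g0, hc0def]
      congr 1
      exact Finset.sum_congr rfl fun i _ => by rw [hg0def]; simp only; rw [hfX i]
    linarith
  -- the set
  have hbdd : BddBelow {c : ℝ | ∃ γ : Measure (E × E), IsProbabilityMeasure γ ∧
      γ.map Prod.fst = empMeas X ∧ γ.map Prod.snd = wEmpMeas w X' ∧
      c = (∫ p, ‖p.1 - p.2‖ ^ q ∂γ) ^ (1 / q)} := by
    refine ⟨0, fun c hc => ?_⟩
    obtain ⟨γ, _, _, _, rfl⟩ := hc
    exact Real.rpow_nonneg (integral_nonneg fun p => Real.rpow_nonneg (norm_nonneg _) q) _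
  have part1 : c0 ^ (1 / q) ≤ Wdist q (empMeas X) (wEmpMeas w X') := by
    refine le_csInf ⟨(∫ p, ‖p.1 - p.2‖ ^ q ∂((empMeas X).prod (wEmpMeas w X'))) ^ (1 / q),
      (empMeas X).prod (wEmpMeas w X'), inferInstance, Measure.fst_prod, Measure.snd_prod, rfl⟩ ?_
    rintro c ⟨γ, hγ, h1, h2, rfl⟩
    refine Real.rpow_le_rpow hc0nonneg ?_ (by positivity)
    exact keybound γ hγ h1 (by rw [h2]; exact wEmpMeas_compl_range w X' hmr'.compl)
  refine ⟨part1, ?_⟩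
  have part2 : Wdist q (empMeas X) (wEmpMeas wNN X') ≤ c0 ^ (1 / q) := by
    refine csInf_le ?_ ?_
    · refine ⟨0, fun c hc => ?_⟩
      obtain ⟨γ, _, _, _, rfl⟩ := hc
      exact Real.rpow_nonneg (integral_nonneg fun p => Real.rpow_nonneg (norm_nonneg _) q) _
    · refine ⟨empMeas (fun i => (X i, X' (NN i))), empMeas_prob hn _, ?_, ?_, ?_⟩
      · rw [map_empMeas _ measurable_fst]
      · rw [map_empMeas _ measurable_snd]
        exact empMeas_NN hn hm X' NN wNN hwNN
      · rw [integral_empMeas]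
  exact le_trans part2 part1
end

section
/- Let μ* and ν be probability measures on R^d with supp(μ*) ⊆ supp(ν). Then for every ε > 0 there exists a probability density ρ with respect to ν such that for all q ≥ 1 the q-Wasserstein distance W_q(μ*, ρ dν) < ε. -/
open MeasureTheory Metric
open scoped ENNReal BigOperators

/-- The support of a measure `ν`: points all of whose closed balls have positive measure. -/
def suppSet {E : Type*} [PseudoMetricSpace E] [MeasurableSpace E] (ν : Measure E) : Set E :=
  {x | ∀ r > (0 : ℝ), 0 < ν (closedBall x r)}

lemma suppSet_compl_null {E : Type*} [PseudoMetricSpace E] [SecondCountableTopology E]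
    [MeasurableSpace E] (μ : Measure E) : μ (suppSet μ)ᶜ = 0 := by
  have h : ∀ x : ((suppSet μ)ᶜ : Set E), ∃ r > (0:ℝ), μ (closedBall (x:E) r) = 0 := by
    intro x
    have hx := x.2
    simp only [suppSet, Set.mem_compl_iff, Set.mem_setOf_eq, not_forall, not_lt,
      nonpos_iff_eq_zero, exists_prop] at hx
    exact hx
  choose r hr h0 using h
  obtain ⟨T, hTc, hT⟩ := TopologicalSpace.isOpen_iUnion_countable
    (fun x : ((suppSet μ)ᶜ : Set E) => ball (x:E) (r x)) (fun x => isOpen_ball)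
  have hsub : (suppSet μ)ᶜ ⊆ ⋃ x ∈ T, ball (x:E) (r x) := by
    rw [hT]
    intro y hy
    exact Set.mem_iUnion.2 ⟨⟨y, hy⟩, mem_ball_self (hr _)⟩
  refine measure_mono_null hsub ?_
  exact (measure_biUnion_null_iff hTc).2 fun x _ =>
    measure_mono_null ball_subset_closedBall (h0 x)

/-- Approximation in Wasserstein distance by measures absolutely continuous w.r.t. `ν`. -/
theorem stmt3 {d : ℕ} (μs ν : Measure (EuclideanSpace ℝ (Fin d)))
    [IsProbabilityMeasure μs] [IsProbabilityMeasure ν]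
    (hsupp : suppSet μs ⊆ suppSet ν)
    (ε : ℝ) (hε : 0 < ε) :
    ∃ ρ : EuclideanSpace ℝ (Fin d) → ℝ≥0∞,
      IsProbabilityMeasure (ν.withDensity ρ) ∧
      ∀ q : ℝ, 1 ≤ q → Wdist q μs (ν.withDensity ρ) < ε := by
  set E := EuclideanSpace ℝ (Fin d)
  set s := suppSet μs with hs_def
  have hs_null : μs sᶜ = 0 := suppSet_compl_null μs
  have hs_ne : s.Nonempty := by
    by_contra h
    rw [Set.not_nonempty_iff_eq_empty] at h
    rw [h, Set.compl_empty] at hs_null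
    simp [measure_univ] at hs_null
  -- countable dense subset of the support
  have hsep : TopologicalSpace.IsSeparable s := TopologicalSpace.IsSeparable.of_separableSpace s
  obtain ⟨t, hts, htc, hst⟩ := hsep.exists_countable_dense_subset
  have ht_ne : t.Nonempty := by
    rcases hs_ne with ⟨x, hx⟩
    by_contra h
    rw [Set.not_nonempty_iff_eq_empty] at h
    have := hst hx
    simp [h] at this
  obtain ⟨c, hc⟩ := htc.exists_eq_range ht_ne
  set δ := ε / 4 with hδ_def
  have hδ : 0 < δ := by positivity
  set B : ℕ → Set E := fun k => closedBall (c k) δ with hB_def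
  have hBmeas : ∀ k, MeasurableSet (B k) := fun k => measurableSet_closedBall
  have hck : ∀ k, c k ∈ s := fun k => hts (hc ▸ Set.mem_range_self k)
  have hνB : ∀ k, 0 < ν (B k) := fun k => hsupp (hck k) δ hδ
  have hνB_top : ∀ k, ν (B k) ≠ ∞ := fun k => measure_ne_top ν _
  set A : ℕ → Set E := disjointed B with hA_def
  have hAmeas : ∀ k, MeasurableSet (A k) := MeasurableSet.disjointed hBmeas
  have hAdis : Pairwise (Function.onFun Disjoint A) := disjoint_disjointed B
  have hAB : ∀ k, A k ⊆ B k := disjointed_subset B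
  have hAU : ⋃ k, A k = ⋃ k, B k := iUnion_disjointed
  have hsU : s ⊆ ⋃ k, A k := by
    rw [hAU]
    intro x hx
    have hxc : x ∈ closure t := hst hx
    rw [hc] at hxc
    rcases Metric.mem_closure_iff.1 hxc δ hδ with ⟨b, hb, hdist⟩
    rcases hb with ⟨k, rfl⟩
    exact Set.mem_iUnion.2 ⟨k, mem_closedBall.2 hdist.le⟩
  have hAU_ae : ∀ᵐ x ∂μs, x ∈ ⋃ k, A k := by
    rw [ae_iff]
    refine measure_mono_null ?_ hs_null
    intro x hx
    exact fun hxs => hx (hsU hxs)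
  have hμsU : μs (⋃ k, A k) = 1 := by
    refine le_antisymm prob_le_one ?_
    have h1 : (Set.univ : Set E) ⊆ (⋃ k, A k) ∪ sᶜ := by
      intro x _
      by_cases hx : x ∈ s
      · exact Or.inl (hsU hx)
      · exact Or.inr hx
    calc (1 : ℝ≥0∞) = μs Set.univ := (measure_univ).symm
      _ ≤ μs ((⋃ k, A k) ∪ sᶜ) := measure_mono h1
      _ ≤ μs (⋃ k, A k) + μs sᶜ := measure_union_le _ _
      _ = μs (⋃ k, A k) := by rw [hs_null, add_zero]
  have hμsA_sum : ∑' k, μs (A k) = 1 := by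
    rw [← measure_iUnion hAdis hAmeas, hμsU]
  set w : ℕ → ℝ≥0∞ := fun k => μs (A k) / ν (B k) with hw_def
  set ρ : E → ℝ≥0∞ := fun x => ∑' k, (B k).indicator (fun _ => w k) x with hρ_def
  have hρ_fun : ρ = ∑' k, (B k).indicator (fun _ => w k) := by
    ext x
    rw [tsum_apply (Pi.summable.2 fun _ => ENNReal.summable)]
  have hη : ν.withDensity ρ = Measure.sum (fun k => w k • ν.restrict (B k)) := by
    rw [hρ_fun]
    rw [withDensity_tsum (fun k => measurable_const.indicator (hBmeas k))]
    congr 1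
    ext k : 1
    rw [withDensity_indicator (hBmeas k), withDensity_const]
  have hρ_prob : IsProbabilityMeasure (ν.withDensity ρ) := by
    constructor
    rw [hη, Measure.sum_apply _ MeasurableSet.univ]
    have : ∀ k, (w k • ν.restrict (B k)) Set.univ = μs (A k) := by
      intro k
      rw [Measure.smul_apply, Measure.restrict_apply_univ, smul_eq_mul, hw_def]
      exact ENNReal.div_mul_cancel (hνB k).ne' (hνB_top k)
    simp_rw [this]
    exact hμsA_sum
  refine ⟨ρ, hρ_prob, fun q hq => ?_⟩
  have hq0 : 0 < q := lt_of_lt_of_le one_pos hq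
  -- the coupling
  set γk : ℕ → Measure (E × E) := fun k =>
    (ν (B k))⁻¹ • ((μs.restrict (A k)).prod (ν.restrict (B k))) with hγk_def
  set γ : Measure (E × E) := Measure.sum γk with hγ_def
  have hγk_univ : ∀ k, γk k Set.univ = μs (A k) := by
    intro k
    rw [hγk_def]
    simp only [Measure.smul_apply, smul_eq_mul]
    rw [← Set.univ_prod_univ, Measure.prod_prod, Measure.restrict_apply_univ,
      Measure.restrict_apply_univ]
    rw [← mul_assoc, mul_comm ((ν (B k))⁻¹), mul_assoc,
      ENNReal.inv_mul_cancel (hνB k).ne' (hνB_top k), mul_one]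
  have hγ_prob : IsProbabilityMeasure γ := by
    constructor
    rw [hγ_def, Measure.sum_apply _ MeasurableSet.univ]
    simp_rw [hγk_univ]
    exact hμsA_sum
  have hfst : γ.map Prod.fst = μs := by
    rw [hγ_def, Measure.map_sum measurable_fst.aemeasurable]
    have : ∀ k, (γk k).map Prod.fst = μs.restrict (A k) := by
      intro k
      rw [hγk_def, Measure.map_smul, Measure.map_fst_prod, Measure.restrict_apply_univ,
        smul_smul, ENNReal.inv_mul_cancel (hνB k).ne' (hνB_top k), one_smul]
    simp_rw [this]
    rw [← Measure.restrict_iUnion hAdis hAmeas]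
    exact Measure.restrict_eq_self_of_ae_mem hAU_ae
  have hsnd : γ.map Prod.snd = ν.withDensity ρ := by
    rw [hγ_def, Measure.map_sum measurable_snd.aemeasurable, hη]
    congr 1
    ext k : 1
    rw [hγk_def, Measure.map_smul, Measure.map_snd_prod, Measure.restrict_apply_univ,
      smul_smul, mul_comm]
    show (μs (A k) * (ν (B k))⁻¹) • ν.restrict (B k) = (μs (A k) / ν (B k)) • ν.restrict (B k)
    rw [div_eq_mul_inv]
  -- a.e. distance bound
  have hcost : ∀ᵐ p ∂γ, ‖p.1 - p.2‖ ≤ ε / 2 := by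
    have hmeas : MeasurableSet {p : E × E | ‖p.1 - p.2‖ ≤ ε / 2} := by
      apply IsClosed.measurableSet
      exact isClosed_le ((continuous_fst.sub continuous_snd).norm) continuous_const
    rw [hγ_def, Measure.ae_sum_iff' hmeas]
    intro k
    have hmem : ∀ᵐ p ∂(γk k), p ∈ A k ×ˢ B k := by
      rw [ae_iff]
      rw [hγk_def]
      simp only [Measure.smul_apply, smul_eq_mul]
      have h0 : ((μs.restrict (A k)).prod (ν.restrict (B k))) {p | ¬ p ∈ A k ×ˢ B k} = 0 := by
        have hps : {p : E × E | ¬ p ∈ A k ×ˢ B k} = (A k ×ˢ B k)ᶜ := rfl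
        rw [hps, Measure.prod_restrict, Measure.restrict_apply (((hAmeas k).prod (hBmeas k)).compl)]
        simp
      rw [h0, mul_zero]
    filter_upwards [hmem] with p hp
    rcases hp with ⟨hp1, hp2⟩
    have h1 : dist p.1 (c k) ≤ δ := mem_closedBall.1 (hAB k hp1)
    have h2 : dist p.2 (c k) ≤ δ := mem_closedBall.1 hp2
    have : dist p.1 p.2 ≤ δ + δ := le_trans (dist_triangle_right p.1 p.2 (c k)) (add_le_add h1 h2)
    rw [← dist_eq_norm]
    calc dist p.1 p.2 ≤ δ + δ := this
      _ = ε / 2 := by rw [hδ_def]; ring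
  -- evaluate the cost
  have hInonneg : 0 ≤ ∫ p, ‖p.1 - p.2‖ ^ q ∂γ :=
    integral_nonneg fun p => Real.rpow_nonneg (norm_nonneg _) q
  have hIle : ∫ p, ‖p.1 - p.2‖ ^ q ∂γ ≤ (ε / 2) ^ q := by
    by_cases hint : Integrable (fun p : E × E => ‖p.1 - p.2‖ ^ q) γ
    · have := hγ_prob
      calc ∫ p, ‖p.1 - p.2‖ ^ q ∂γ ≤ ∫ _, (ε / 2) ^ q ∂γ := by
            refine integral_mono_ae hint (integrable_const _) ?_
            filter_upwards [hcost] with p hp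
            exact Real.rpow_le_rpow (norm_nonneg _) hp hq0.le
        _ = (ε / 2) ^ q := by rw [integral_const, probReal_univ]; simp
    · rw [integral_undef hint]
      positivity
  set c₀ : ℝ := (∫ p, ‖p.1 - p.2‖ ^ q ∂γ) ^ (1 / q) with hc₀_def
  have hc₀_mem : c₀ ∈ {c : ℝ | ∃ γ : Measure (E × E), IsProbabilityMeasure γ ∧
      γ.map Prod.fst = μs ∧ γ.map Prod.snd = ν.withDensity ρ ∧
      c = (∫ p, ‖p.1 - p.2‖ ^ q ∂γ) ^ (1 / q)} := ⟨γ, hγ_prob, hfst, hsnd, rfl⟩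
  have hbdd : BddBelow {c : ℝ | ∃ γ : Measure (E × E), IsProbabilityMeasure γ ∧
      γ.map Prod.fst = μs ∧ γ.map Prod.snd = ν.withDensity ρ ∧
      c = (∫ p, ‖p.1 - p.2‖ ^ q ∂γ) ^ (1 / q)} := by
    refine ⟨0, fun x hx => ?_⟩
    rcases hx with ⟨γ', _, _, _, rfl⟩
    exact Real.rpow_nonneg (integral_nonneg fun p => Real.rpow_nonneg (norm_nonneg _) q) _
  have hc₀_le : c₀ ≤ ε / 2 := by
    rw [hc₀_def]
    calc (∫ p, ‖p.1 - p.2‖ ^ q ∂γ) ^ (1 / q) ≤ ((ε / 2) ^ q) ^ (1 / q) :=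
          Real.rpow_le_rpow hInonneg hIle (by positivity)
      _ = (ε / 2) ^ (q * (1 / q)) := by
          rw [← Real.rpow_mul (by positivity : (0:ℝ) ≤ ε / 2)]
      _ = ε / 2 := by rw [mul_one_div_cancel hq0.ne', Real.rpow_one]
  calc Wdist q μs (ν.withDensity ρ) ≤ c₀ := csInf_le hbdd hc₀_mem
    _ ≤ ε / 2 := hc₀_le
    _ < ε := by linarith
end

section
/- If X'_1, X'_2, ... are i.i.d. random vectors in R^d such that E[min_{j ≤ m_0} |X'_j|] < ∞ for some m_0 ≥ 1, then for every q ≥ 1 and every m ≥ ⌈q⌉·m_0, one has E[min_{j ≤ m} |X'_j|^q] ≤ (E[min_{j ≤ m_0} |X'_j|])^q < ∞. -/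
open MeasureTheory ProbabilityTheory
open scoped ENNReal BigOperators

section Aux

lemma aux_lt_ciInf {r : ℕ} (hr : 0 < r) (f : Fin r → ℝ) (t : ℝ) :
    t < (⨅ j, f j) ↔ ∀ j, t < f j := by
  haveI : Nonempty (Fin r) := Fin.pos_iff_nonempty.mp hr
  constructor
  · intro h j
    exact h.trans_le (ciInf_le (Set.finite_range f).bddBelow j)
  · intro h
    obtain ⟨j₀, hj₀⟩ := exists_eq_ciInf_of_finite (f := f)
    rw [← hj₀]
    exact h j₀

variable {E : Type*} [NormedAddCommGroup E] [MeasurableSpace E] [BorelSpace E]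
  {Ω : Type*} [MeasurableSpace Ω] {P : Measure Ω} [IsProbabilityMeasure P]
  {X' : ℕ → Ω → E}

lemma aux_meas_min (hmeas : ∀ j, Measurable (X' j)) {r : ℕ} (n : Fin r → ℕ) :
    Measurable (fun ω => ⨅ j : Fin r, ‖X' (n j) ω‖) :=
  Measurable.iInf fun j => (hmeas (n j)).norm

lemma aux_survival (hmeas : ∀ j, Measurable (X' j))
    (hindep : iIndepFun X' P)
    (hident : ∀ j, Measure.map (X' j) P = Measure.map (X' 0) P)
    {r : ℕ} (hr : 0 < r) {n : Fin r → ℕ} (hn : Function.Injective n) (t : ℝ) :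
    P {ω | t < ⨅ j : Fin r, ‖X' (n j) ω‖} = (Measure.map (X' 0) P {x | t < ‖x‖}) ^ r := by
  classical
  have hA : MeasurableSet {x : E | t < ‖x‖} :=
    measurableSet_lt measurable_const measurable_norm
  have hset : {ω | t < ⨅ j : Fin r, ‖X' (n j) ω‖}
      = ⋂ a ∈ Finset.image n Finset.univ, X' a ⁻¹' {x : E | t < ‖x‖} := by
    ext ω
    simp only [Set.mem_setOf_eq, aux_lt_ciInf hr, Set.mem_iInter, Finset.mem_image,
      Finset.mem_univ, true_and, Set.mem_preimage, forall_exists_index]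
    constructor
    · rintro h a j rfl
      exact h j
    · intro h j
      exact h (n j) j rfl
  rw [hset, hindep.meas_biInter (fun a _ => ⟨{x : E | t < ‖x‖}, hA, rfl⟩),
    Finset.prod_image (fun j _ j' _ h => hn h)]
  have key : ∀ j : Fin r, P (X' (n j) ⁻¹' {x : E | t < ‖x‖})
      = Measure.map (X' 0) P {x : E | t < ‖x‖} := by
    intro j
    rw [← Measure.map_apply (hmeas (n j)) hA, hident (n j)]
  simp only [Set.preimage_setOf_eq] at key
  simp [key]

lemma aux_lint (hmeas : ∀ j, Measurable (X' j))
    (hindep : iIndepFun X' P)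
    (hident : ∀ j, Measure.map (X' j) P = Measure.map (X' 0) P)
    {r : ℕ} (hr : 0 < r) {n : Fin r → ℕ} (hn : Function.Injective n) :
    ∫⁻ ω, ENNReal.ofReal (⨅ j : Fin r, ‖X' (n j) ω‖) ∂P
      = ∫⁻ ω, ENNReal.ofReal (⨅ j : Fin r, ‖X' j ω‖) ∂P := by
  rw [lintegral_eq_lintegral_meas_lt P
      (ae_of_all _ fun ω => Real.iInf_nonneg fun j => norm_nonneg _)
      (aux_meas_min hmeas n).aemeasurable,
    lintegral_eq_lintegral_meas_lt P
      (ae_of_all _ fun ω => Real.iInf_nonneg fun j => norm_nonneg _)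
      (aux_meas_min hmeas (fun j : Fin r => (j : ℕ))).aemeasurable]
  refine lintegral_congr fun t => ?_
  rw [aux_survival hmeas hindep hident hr hn t,
    aux_survival hmeas hindep hident hr (Fin.val_injective) t]

lemma aux_prod_lintegral (hmeas : ∀ j, Measurable (X' j))
    (hindep : iIndepFun X' P)
    (m₀ : ℕ) (s : Finset ℕ) :
    ∫⁻ ω, ∏ i ∈ s, ENNReal.ofReal (⨅ j : Fin m₀, ‖X' (m₀ * i + j) ω‖) ∂P
      = ∏ i ∈ s, ∫⁻ ω, ENNReal.ofReal (⨅ j : Fin m₀, ‖X' (m₀ * i + j) ω‖) ∂P := by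
  classical
  set G : ℕ → Ω → ℝ≥0∞ := fun i ω => ENNReal.ofReal (⨅ j : Fin m₀, ‖X' (m₀ * i + j) ω‖)
    with hG
  have hGmeas : ∀ i, Measurable (G i) := fun i =>
    ENNReal.measurable_ofReal.comp (aux_meas_min hmeas (fun j : Fin m₀ => m₀ * i + (j : ℕ)))
  induction s using Finset.cons_induction with
  | empty => simp
  | cons a s ha ih =>
    -- block index sets
    set S : Finset ℕ := Finset.Ico (m₀ * a) (m₀ * a + m₀) with hS
    set T : Finset ℕ := s.biUnion (fun i => Finset.Ico (m₀ * i) (m₀ * i + m₀)) with hT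
    have hdisj : Disjoint S T := by
      rw [hT, Finset.disjoint_biUnion_right]
      intro i hi
      rw [Finset.disjoint_left]
      intro x hx hx'
      rw [hS, Finset.mem_Ico] at hx
      rw [Finset.mem_Ico] at hx'
      have hia : i ≠ a := fun h => ha (h ▸ hi)
      rcases lt_or_gt_of_ne hia with h | h
      · have h1 : m₀ * i + m₀ ≤ m₀ * a := by
          calc m₀ * i + m₀ = m₀ * (i + 1) := by ring
            _ ≤ m₀ * a := Nat.mul_le_mul_left _ h
        omega
      · have h1 : m₀ * a + m₀ ≤ m₀ * i := by
          calc m₀ * a + m₀ = m₀ * (a + 1) := by ring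
            _ ≤ m₀ * i := Nat.mul_le_mul_left _ h
        omega
    have hmemS : ∀ j : Fin m₀, m₀ * a + (j : ℕ) ∈ S := by
      intro j
      have := j.isLt
      rw [hS, Finset.mem_Ico]
      omega
    have hmemT : ∀ i : {x : ℕ // x ∈ s}, ∀ j : Fin m₀, m₀ * (i : ℕ) + (j : ℕ) ∈ T := by
      intro i j
      have := j.isLt
      rw [hT, Finset.mem_biUnion]
      exact ⟨i, i.2, Finset.mem_Ico.mpr ⟨Nat.le_add_right _ _, by omega⟩⟩
    set φ : ({x : ℕ // x ∈ S} → E) → ℝ≥0∞ :=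
      fun v => ENNReal.ofReal (⨅ j : Fin m₀, ‖v (⟨m₀ * a + (j : ℕ), hmemS j⟩ : {x : ℕ // x ∈ S})‖) with hφ
    set ψ : ({x : ℕ // x ∈ T} → E) → ℝ≥0∞ :=
      fun v => ∏ i ∈ s.attach,
        ENNReal.ofReal (⨅ j : Fin m₀, ‖v (⟨m₀ * (i : ℕ) + (j : ℕ), hmemT i j⟩ : {x : ℕ // x ∈ T})‖) with hψ
    have hφmeas : Measurable φ :=
      ENNReal.measurable_ofReal.comp
        (Measurable.iInf fun j => (measurable_pi_apply _).norm)
    have hψmeas : Measurable ψ :=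
      Finset.measurable_prod _ fun i _ =>
        ENNReal.measurable_ofReal.comp (Measurable.iInf fun j => (measurable_pi_apply _).norm)
    have hIf : IndepFun (fun ω (p : {x : ℕ // x ∈ S}) => X' p ω)
        (fun ω (p : {x : ℕ // x ∈ T}) => X' p ω) P :=
      hindep.indepFun_finset S T hdisj hmeas
    have hcomp := hIf.comp hφmeas hψmeas
    have h1 : (φ ∘ fun ω (p : {x : ℕ // x ∈ S}) => X' p ω) = G a := rfl
    have h2 : (ψ ∘ fun ω (p : {x : ℕ // x ∈ T}) => X' p ω) = fun ω => ∏ i ∈ s, G i ω := by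
      funext ω
      exact Finset.prod_attach s fun i => G i ω
    rw [h1, h2] at hcomp
    have hprodmeas : Measurable (fun ω => ∏ i ∈ s, G i ω) :=
      Finset.measurable_prod _ fun i _ => hGmeas i
    calc ∫⁻ ω, ∏ i ∈ Finset.cons a s ha, G i ω ∂P
        = ∫⁻ ω, (G a * fun ω => ∏ i ∈ s, G i ω) ω ∂P := by
          refine lintegral_congr fun ω => ?_
          simp [Finset.prod_cons, Finset.prod_insert ha]
      _ = (∫⁻ ω, G a ω ∂P) * ∫⁻ ω, ∏ i ∈ s, G i ω ∂P :=
          lintegral_mul_eq_lintegral_mul_lintegral_of_indepFun (hGmeas a) hprodmeas hcomp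
      _ = ∏ i ∈ Finset.cons a s ha, ∫⁻ ω, G i ω ∂P := by
          rw [ih, Finset.prod_cons]

end Aux

/-- Min-integrability propagates: for `m ≥ ⌈q⌉·m₀`, the `q`-th moment of the minimum norm
over `m` i.i.d. vectors is bounded by the `q`-th power of `E[min_{j ≤ m₀} |X'_j|]`. -/
theorem stmt5 {E : Type*} [NormedAddCommGroup E] [MeasurableSpace E] [BorelSpace E]
    {Ω : Type*} [MeasurableSpace Ω] (P : Measure Ω) [IsProbabilityMeasure P]
    (X' : ℕ → Ω → E)
    (hmeas : ∀ j, Measurable (X' j))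
    (hindep : iIndepFun X' P)
    (hident : ∀ j, Measure.map (X' j) P = Measure.map (X' 0) P)
    (m₀ : ℕ) (hm₀ : 1 ≤ m₀)
    (hint : Integrable (fun ω => ⨅ j : Fin m₀, ‖X' j ω‖) P)
    (q : ℝ) (hq : 1 ≤ q) (m : ℕ) (hm : ⌈q⌉₊ * m₀ ≤ m) :
    ∫ ω, (⨅ j : Fin m, ‖X' j ω‖) ^ q ∂P
      ≤ (∫ ω, ⨅ j : Fin m₀, ‖X' j ω‖ ∂P) ^ q := by
  classical
  set k := ⌈q⌉₊ with hkdef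
  have hq0 : 0 < q := lt_of_lt_of_le one_pos hq
  have hk1 : 1 ≤ k := Nat.one_le_ceil_iff.mpr hq0
  have hqk : q ≤ (k : ℝ) := Nat.le_ceil q
  have hkR : (0 : ℝ) < (k : ℝ) := by exact_mod_cast hk1
  set Z : Ω → ℝ := fun ω => ⨅ j : Fin m, ‖X' j ω‖ with hZ
  have hZmeas : Measurable Z := aux_meas_min hmeas (fun j : Fin m => (j : ℕ))
  have hZnn : ∀ ω, 0 ≤ Z ω := fun ω => Real.iInf_nonneg fun j => norm_nonneg _
  set G : ℕ → Ω → ℝ≥0∞ := fun i ω => ENNReal.ofReal (⨅ j : Fin m₀, ‖X' (m₀ * i + j) ω‖)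
    with hG
  set C : ℝ≥0∞ := ∫⁻ ω, ENNReal.ofReal (⨅ j : Fin m₀, ‖X' j ω‖) ∂P with hC
  have hGint : ∀ i, ∫⁻ ω, G i ω ∂P = C := by
    intro i
    exact aux_lint hmeas hindep hident (by omega : 0 < m₀)
      (n := fun j : Fin m₀ => m₀ * i + (j : ℕ))
      (fun j j' h => Fin.val_injective (Nat.add_left_cancel h))
  -- pointwise bound
  have hZle : ∀ i < k, ∀ ω, Z ω ≤ ⨅ j : Fin m₀, ‖X' (m₀ * i + j) ω‖ := by
    intro i hi ω
    haveI : Nonempty (Fin m₀) := ⟨⟨0, hm₀⟩⟩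
    refine le_ciInf fun j => ?_
    have hidx : m₀ * i + (j : ℕ) < m := by
      have hj := j.isLt
      have h2 : m₀ * (i + 1) ≤ m₀ * k := Nat.mul_le_mul_left _ (by omega)
      have h3 : m₀ * k = k * m₀ := Nat.mul_comm _ _
      have h4 : m₀ * (i + 1) = m₀ * i + m₀ := by ring
      omega
    exact ciInf_le (Set.finite_range _).bddBelow (⟨m₀ * i + (j : ℕ), hidx⟩ : Fin m)
  set A : ℝ≥0∞ := ∫⁻ ω, (ENNReal.ofReal (Z ω)) ^ q ∂P with hA
  set B : ℝ≥0∞ := ∫⁻ ω, (ENNReal.ofReal (Z ω)) ^ (k : ℝ) ∂P with hB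
  -- Jensen step: A ≤ B ^ (q / k)
  have hAB : A ≤ B ^ (q / (k : ℝ)) := by
    have hpq : ENNReal.ofReal q ≤ (k : ℝ≥0∞) := by
      rw [← ENNReal.ofReal_natCast]
      exact ENNReal.ofReal_le_ofReal hqk
    have hsn := eLpNorm_le_eLpNorm_of_exponent_le (μ := P) (f := Z) hpq
      hZmeas.aestronglyMeasurable
    rw [eLpNorm_eq_lintegral_rpow_enorm_toReal (by simp [hq0]) (by simp),
      eLpNorm_eq_lintegral_rpow_enorm_toReal (by exact_mod_cast hkR.ne') (by simp)] at hsn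
    simp only [ENNReal.toReal_ofReal hq0.le, ENNReal.toReal_natCast] at hsn
    have hnorm : ∀ ω, ‖Z ω‖ₑ = ENNReal.ofReal (Z ω) := by
      intro ω
      rw [← ofReal_norm, Real.norm_of_nonneg (hZnn ω)]
    simp only [hnorm] at hsn
    have := ENNReal.rpow_le_rpow hsn hq0.le
    rwa [← ENNReal.rpow_mul, ← ENNReal.rpow_mul, one_div_mul_cancel hq0.ne',
      ENNReal.rpow_one, one_div, inv_mul_eq_div] at this
  -- independence step : B ≤ C ^ k
  have hBC : B ≤ C ^ (k : ℕ) := by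
    have hBprod : B ≤ ∫⁻ ω, ∏ i ∈ Finset.range k, G i ω ∂P := by
      refine lintegral_mono fun ω => ?_
      rw [show ((k : ℝ)) = ((k : ℕ) : ℝ) from rfl, ENNReal.rpow_natCast]
      calc (ENNReal.ofReal (Z ω)) ^ (k : ℕ)
          = ∏ _i ∈ Finset.range k, ENNReal.ofReal (Z ω) := by
            simp
        _ ≤ ∏ i ∈ Finset.range k, G i ω :=
            Finset.prod_le_prod' fun i hi =>
              ENNReal.ofReal_le_ofReal (hZle i (Finset.mem_range.mp hi) ω)
    calc B ≤ ∫⁻ ω, ∏ i ∈ Finset.range k, G i ω ∂P := hBprod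
      _ = ∏ i ∈ Finset.range k, ∫⁻ ω, G i ω ∂P :=
          aux_prod_lintegral hmeas hindep m₀ (Finset.range k)
      _ = C ^ (k : ℕ) := by simp [hGint]
  have hAC : A ≤ C ^ q := by
    calc A ≤ B ^ (q / (k : ℝ)) := hAB
      _ ≤ (C ^ (k : ℕ)) ^ (q / (k : ℝ)) :=
          ENNReal.rpow_le_rpow hBC (by positivity)
      _ = C ^ q := by
          rw [← ENNReal.rpow_natCast C k, ← ENNReal.rpow_mul,
            mul_div_cancel₀ q hkR.ne']
  -- conversions to real integrals
  have hCtop : C ≠ ⊤ := by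
    have hle : C ≤ ∫⁻ ω, (‖⨅ j : Fin m₀, ‖X' j ω‖‖₊ : ℝ≥0∞) ∂P := by
      refine lintegral_mono fun ω => ?_
      rw [← enorm_eq_nnnorm, ← ofReal_norm]
      exact ENNReal.ofReal_le_ofReal (le_abs_self _)
    exact ne_top_of_le_ne_top hint.2.ne hle
  have hLHS : ∫ ω, (Z ω) ^ q ∂P = A.toReal := by
    rw [integral_eq_lintegral_of_nonneg_ae
        (ae_of_all _ fun ω => Real.rpow_nonneg (hZnn ω) q)
        ((Real.continuous_rpow_const hq0.le).measurable.comp hZmeas).aestronglyMeasurable]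
    congr 1
    refine lintegral_congr fun ω => ?_
    rw [← ENNReal.ofReal_rpow_of_nonneg (hZnn ω) hq0.le]
  have hRHS : ∫ ω, ⨅ j : Fin m₀, ‖X' j ω‖ ∂P = C.toReal := by
    rw [integral_eq_lintegral_of_nonneg_ae
        (ae_of_all _ fun ω => Real.iInf_nonneg fun j => norm_nonneg _)
        (aux_meas_min hmeas (fun j : Fin m₀ => (j : ℕ))).aestronglyMeasurable]
  rw [hLHS, hRHS]
  calc A.toReal ≤ (C ^ q).toReal :=
      ENNReal.toReal_mono (ENNReal.rpow_ne_top_of_nonneg hq0.le hCtop) hAC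
    _ = C.toReal ^ q := by rw [← ENNReal.toReal_rpow]
end

section
/- Let X' be a random vector in R^d whose law has, on an open set U ⊇ supp(μ_X), a continuous positive density p satisfying the strong minimal mass assumption: there exist κ ∈ (0,1] and r_κ > 0 such that P(X' ∈ B(x,r)) ≥ κ p(x) v_d r^d for all x ∈ U, r ∈ [0, r_κ]. Then for x ∈ supp(μ_X), t ∈ [0, r_κ^q m^{q/d}], and m i.i.d. copies X'_1,...,X'_m, one has P(min_j |x − X'_j|^q > t/m^{q/d}) ≤ exp(−κ v_d p(x) t^{d/q}). -/
open MeasureTheory ProbabilityTheory Metric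
open scoped ENNReal BigOperators

/-- Exponential tail bound for the nearest-neighbor distance under the strong minimal
mass assumption. -/
theorem stmt8 {d : ℕ} (hd : 1 ≤ d)
    {Ω : Type*} [MeasurableSpace Ω] (P : Measure Ω) [IsProbabilityMeasure P]
    (μ' : Measure (EuclideanSpace ℝ (Fin d))) [IsProbabilityMeasure μ']
    (X' : ℕ → Ω → EuclideanSpace ℝ (Fin d))
    (hmeas : ∀ j, Measurable (X' j))
    (hindep : iIndepFun X' P)
    (hlaw : ∀ j, Measure.map (X' j) P = μ')
    (U : Set (EuclideanSpace ℝ (Fin d))) (hU : IsOpen U)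
    (p : EuclideanSpace ℝ (Fin d) → ℝ)
    (hdens : μ'.restrict U
      = (volume.withDensity fun y => ENNReal.ofReal (p y)).restrict U)
    (hcont : ContinuousOn p U) (hpos : ∀ y ∈ U, 0 < p y)
    (κ rκ : ℝ) (hκ : κ ∈ Set.Ioc (0 : ℝ) 1) (hrκ : 0 < rκ)
    (vd : ℝ)
    (hvd : vd = (volume (closedBall (0 : EuclideanSpace ℝ (Fin d)) 1)).toReal)
    (hsmma : ∀ y ∈ U, ∀ r ∈ Set.Icc (0 : ℝ) rκ,
      ENNReal.ofReal (κ * p y * vd * r ^ d) ≤ μ' (closedBall y r))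
    (x : EuclideanSpace ℝ (Fin d)) (hx : x ∈ U)
    (q : ℝ) (hq : 1 ≤ q) (m : ℕ) (hm : 1 ≤ m)
    (t : ℝ) (ht : t ∈ Set.Icc 0 (rκ ^ q * (m : ℝ) ^ (q / d))) :
    P {ω | t / (m : ℝ) ^ (q / d) < (⨅ j : Fin m, ‖x - X' j ω‖) ^ q}
      ≤ ENNReal.ofReal (Real.exp (-(κ * vd * p x * t ^ ((d : ℝ) / q)))) := by
  have hq0 : (0:ℝ) < q := lt_of_lt_of_le one_pos hq
  have hd0 : (0:ℝ) < d := by exact_mod_cast hd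
  have hm0 : (0:ℝ) < m := by exact_mod_cast hm
  have hM : (0:ℝ) < (m : ℝ) ^ (q / d) := Real.rpow_pos_of_pos hm0 _
  set M : ℝ := (m : ℝ) ^ (q / d) with hMdef
  set r : ℝ := (t / M) ^ (1/q) with hrdef
  have htM0 : 0 ≤ t / M := div_nonneg ht.1 hM.le
  have hr0 : 0 ≤ r := Real.rpow_nonneg htM0 _
  -- r ≤ rκ
  have hrle : r ≤ rκ := by
    have h1 : t / M ≤ rκ ^ q := (div_le_iff₀ hM).2 ht.2
    calc r ≤ (rκ ^ q) ^ (1/q) := Real.rpow_le_rpow htM0 h1 (by positivity)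
      _ = rκ := by
        rw [← Real.rpow_mul hrκ.le, mul_one_div, div_self hq0.ne', Real.rpow_one]
  -- r^d = t^(d/q)/m
  have hrd : (r : ℝ) ^ d = t ^ ((d:ℝ)/q) / m := by
    have : (r : ℝ) ^ d = r ^ (d : ℝ) := (Real.rpow_natCast r d).symm
    rw [this, hrdef, ← Real.rpow_mul htM0, one_div_mul_eq_div,
      Real.div_rpow ht.1 hM.le, hMdef, ← Real.rpow_mul hm0.le]
    rw [div_mul_div_comm, mul_comm q, div_self (by positivity), Real.rpow_one]
  set a : ℝ := κ * p x * vd * r ^ d with hadef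
  have hvd0 : 0 ≤ vd := by rw [hvd]; exact ENNReal.toReal_nonneg
  have hpx : 0 ≤ p x := (hpos x hx).le
  have ha0 : 0 ≤ a := by
    have : (0:ℝ) ≤ r ^ d := pow_nonneg hr0 d
    rw [hadef]
    exact mul_nonneg (mul_nonneg (mul_nonneg hκ.1.le hpx) hvd0) (pow_nonneg hr0 d)
  have hball : ENNReal.ofReal a ≤ μ' (closedBall x r) :=
    hsmma x hx r ⟨hr0, hrle⟩
  have ha1 : a ≤ 1 := by
    have : ENNReal.ofReal a ≤ 1 := hball.trans prob_le_one
    exact (ENNReal.ofReal_le_one).1 this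
  -- event inclusion
  have hsub : {ω | t / M < (⨅ j : Fin m, ‖x - X' j ω‖) ^ q}
      ⊆ ⋂ i ∈ Finset.range m, (X' i) ⁻¹' (closedBall x r)ᶜ := by
    intro ω hω
    simp only [Set.mem_iInter, Finset.mem_range, Set.mem_preimage, Set.mem_compl_iff,
      mem_closedBall, not_le]
    intro i hi
    have hωm : t / M < (⨅ j : Fin m, ‖x - X' j ω‖) ^ q := hω
    have hinf0 : 0 ≤ ⨅ j : Fin m, ‖x - X' j ω‖ := by
      have : Nonempty (Fin m) := Fin.pos_iff_nonempty.1 hm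
      exact le_ciInf fun j => norm_nonneg _
    have hlt : r < ⨅ j : Fin m, ‖x - X' j ω‖ := by
      have := Real.rpow_lt_rpow htM0 hωm (by positivity : (0:ℝ) < 1/q)
      rwa [← Real.rpow_mul hinf0, mul_one_div, div_self hq0.ne',
        Real.rpow_one] at this
    have hle : (⨅ j : Fin m, ‖x - X' j ω‖) ≤ ‖x - X' i ω‖ :=
      ciInf_le (Finite.bddBelow_range _) (⟨i, hi⟩ : Fin m)
    calc r < _ := hlt
      _ ≤ ‖x - X' i ω‖ := hle
      _ = dist (X' i ω) x := by rw [dist_eq_norm, norm_sub_rev]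
  have hCmeas : MeasurableSet ((closedBall x r)ᶜ : Set (EuclideanSpace ℝ (Fin d))) :=
    measurableSet_closedBall.compl
  have hprod : P (⋂ i ∈ Finset.range m, (X' i) ⁻¹' (closedBall x r)ᶜ)
      = ∏ i ∈ Finset.range m, P ((X' i) ⁻¹' (closedBall x r)ᶜ) :=
    hindep.meas_biInter (fun i _ => ⟨(closedBall x r)ᶜ, hCmeas, rfl⟩)
  have hfac : ∀ i, P ((X' i) ⁻¹' (closedBall x r)ᶜ) ≤ ENNReal.ofReal (1 - a) := by
    intro i
    have h1 : P ((X' i) ⁻¹' (closedBall x r)ᶜ) = 1 - μ' (closedBall x r) := by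
      rw [Set.preimage_compl, prob_compl_eq_one_sub ((hmeas i) measurableSet_closedBall),
        ← hlaw i, Measure.map_apply (hmeas i) measurableSet_closedBall]
    rw [h1, ENNReal.ofReal_sub _ ha0, ENNReal.ofReal_one]
    exact tsub_le_tsub_left hball 1
  calc P {ω | t / M < (⨅ j : Fin m, ‖x - X' j ω‖) ^ q}
      ≤ P (⋂ i ∈ Finset.range m, (X' i) ⁻¹' (closedBall x r)ᶜ) := measure_mono hsub
    _ = ∏ i ∈ Finset.range m, P ((X' i) ⁻¹' (closedBall x r)ᶜ) := hprod
    _ ≤ ∏ i ∈ Finset.range m, ENNReal.ofReal (1 - a) :=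
        Finset.prod_le_prod' fun i _ => hfac i
    _ = ENNReal.ofReal ((1 - a) ^ m) := by
        rw [Finset.prod_const, Finset.card_range, ← ENNReal.ofReal_pow (by linarith)]
    _ ≤ ENNReal.ofReal (Real.exp (-(κ * vd * p x * t ^ ((d : ℝ) / q)))) := by
        apply ENNReal.ofReal_le_ofReal
        have h1 : (1 - a) ^ m ≤ Real.exp (-a) ^ m :=
          pow_le_pow_left₀ (by linarith) (by linarith [Real.add_one_le_exp (-a)]) m
        refine h1.trans ?_
        rw [← Real.exp_nat_mul]
        have he : (m:ℝ) * (-a) = -(κ * vd * p x * t ^ ((d:ℝ)/q)) := by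
          rw [hadef, hrd]; field_simp
        rw [he]
end

section
/- Let μ_X' be a probability measure on R^d with density p(x) = h(‖x − x_0‖) where ‖·‖ is a Euclidean norm (induced by an inner product), x_0 ∈ R^d, and h : [0,∞) → (0,∞) is continuous, positive and nonincreasing. Then p satisfies the strong minimal mass assumption on all of R^d: there exist κ ∈ (0,1] and r_κ > 0 such that for all x ∈ R^d and r ∈ [0, r_κ], P(X' ∈ B(x,r)) ≥ κ p(x) v_d r^d. -/
open MeasureTheory
open scoped ENNReal Pointwise RealInnerProductSpace

set_option maxHeartbeats 2000000 in
/-- A radial, continuous, positive, nonincreasing density satisfies the strong minimal mass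
assumption on the whole space, where balls are taken for an arbitrary norm `N`. -/
theorem stmt13 {d : ℕ} (hd : 1 ≤ d)
    (N : EuclideanSpace ℝ (Fin d) → ℝ)
    (hN0 : ∀ y, 0 ≤ N y)
    (hNdef : ∀ y, N y = 0 ↔ y = 0)
    (hNsmul : ∀ (c : ℝ) (y), N (c • y) = |c| * N y)
    (hNadd : ∀ y z, N (y + z) ≤ N y + N z)
    (x₀ : EuclideanSpace ℝ (Fin d))
    (h : ℝ → ℝ) (hcont : Continuous h) (hpos : ∀ r, 0 ≤ r → 0 < h r)
    (hanti : AntitoneOn h (Set.Ici 0))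
    (p : EuclideanSpace ℝ (Fin d) → ℝ)
    (hp : ∀ y, p y = h ‖y - x₀‖)
    (ν : Measure (EuclideanSpace ℝ (Fin d)))
    (hν : ν = volume.withDensity fun y => ENNReal.ofReal (p y))
    (hprob : IsProbabilityMeasure ν)
    (vd : ℝ) (hvd : vd = (volume {y : EuclideanSpace ℝ (Fin d) | N y ≤ 1}).toReal) :
    ∃ κ ∈ Set.Ioc (0 : ℝ) 1, ∃ rκ > (0 : ℝ),
      ∀ x : EuclideanSpace ℝ (Fin d), ∀ r ∈ Set.Icc (0 : ℝ) rκ,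
        ENNReal.ofReal (κ * p x * vd * r ^ d) ≤ ν {y | N (y - x) ≤ r} := by
  have hNzero : N 0 = 0 := (hNdef 0).mpr rfl
  have hNneg : ∀ y, N (-y) = N y := fun y => by
    simpa using hNsmul (-1) y
  have hNsub : ∀ a b : EuclideanSpace ℝ (Fin d), N a - N b ≤ N (a - b) := by
    intro a b
    have h1 := hNadd (a - b) b
    have h2 : a - b + b = a := by abel
    rw [h2] at h1
    linarith
  -- coordinate bound in Euclidean space
  have hcoord : ∀ (y : EuclideanSpace ℝ (Fin d)) (i : Fin d), |y i| ≤ ‖y‖ := by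
    intro y i
    have h1 : |y i| = Real.sqrt ((y i) ^ 2) := by
      rw [Real.sqrt_sq_eq_abs]
    rw [h1, EuclideanSpace.norm_eq]
    apply Real.sqrt_le_sqrt
    have : (y i) ^ 2 = ‖y i‖ ^ 2 := by simp [Real.norm_eq_abs, sq_abs]
    rw [this]
    exact Finset.single_le_sum (f := fun j => ‖y j‖ ^ 2) (fun j _ => by positivity)
      (Finset.mem_univ i)
  -- upper equivalence constant
  obtain ⟨C, hCpos, hCub⟩ : ∃ C > 0, ∀ y, N y ≤ C * ‖y‖ := by
    refine ⟨(∑ i : Fin d, N (EuclideanSpace.single i (1:ℝ))) + 1,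
      add_pos_of_nonneg_of_pos (Finset.sum_nonneg fun i _ => hN0 _) one_pos, ?_⟩
    intro y
    have hdecomp : y = ∑ i : Fin d, y i • EuclideanSpace.single i (1:ℝ) := by
      have := (EuclideanSpace.basisFun (Fin d) ℝ).toBasis.sum_repr y
      simpa [EuclideanSpace.basisFun_apply] using this.symm
    calc N y = N (∑ i : Fin d, y i • EuclideanSpace.single i (1:ℝ)) := by rw [← hdecomp]
      _ ≤ ∑ i : Fin d, N (y i • EuclideanSpace.single i (1:ℝ)) :=
          Finset.le_sum_of_subadditive N hNzero.le hNadd _ _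
      _ = ∑ i : Fin d, |y i| * N (EuclideanSpace.single i (1:ℝ)) := by
          simp [hNsmul]
      _ ≤ ∑ i : Fin d, ‖y‖ * N (EuclideanSpace.single i (1:ℝ)) := by
          apply Finset.sum_le_sum
          intro i _
          exact mul_le_mul_of_nonneg_right (hcoord y i) (hN0 _)
      _ = (∑ i : Fin d, N (EuclideanSpace.single i (1:ℝ))) * ‖y‖ := by
          rw [Finset.sum_mul]
          exact Finset.sum_congr rfl fun i _ => mul_comm _ _
      _ ≤ ((∑ i : Fin d, N (EuclideanSpace.single i (1:ℝ))) + 1) * ‖y‖ := by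
          apply mul_le_mul_of_nonneg_right _ (norm_nonneg _)
          linarith
  -- N is continuous
  have hNcont : Continuous N := by
    apply (LipschitzWith.of_dist_le_mul (K := Real.toNNReal C) (f := N) ?_).continuous
    intro a b
    have h1 := hNsub a b
    have h2 := hNsub b a
    have h3 : N (b - a) = N (a - b) := by rw [← hNneg (a - b)]; congr 1; abel
    have h4 : N (a - b) ≤ C * ‖a - b‖ := hCub _
    rw [Real.dist_eq, Real.coe_toNNReal _ hCpos.le, dist_eq_norm]
    rw [abs_le]
    constructor <;> linarith
  -- lower equivalence constant
  obtain ⟨m, hmpos, hmlb⟩ : ∃ m > 0, ∀ y, m * ‖y‖ ≤ N y := by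
    have hne : (Metric.sphere (0 : EuclideanSpace ℝ (Fin d)) 1).Nonempty := by
      refine ⟨EuclideanSpace.single ⟨0, hd⟩ (1:ℝ), ?_⟩
      simp [EuclideanSpace.norm_single]
    obtain ⟨z, hz, hzmin⟩ :=
      (isCompact_sphere (0 : EuclideanSpace ℝ (Fin d)) 1).exists_isMinOn hne
        hNcont.continuousOn
    have hz1 : ‖z‖ = 1 := by simpa using hz
    have hzne : z ≠ 0 := by
      intro hzz; rw [hzz] at hz1; simp at hz1
    refine ⟨N z, lt_of_le_of_ne (hN0 z) (fun hc => hzne ((hNdef z).mp hc.symm)), ?_⟩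
    intro y
    rcases eq_or_ne y 0 with rfl | hy
    · simp [hNzero]
    · have hy0 : (0:ℝ) < ‖y‖ := norm_pos_iff.mpr hy
      have hmem : ‖y‖⁻¹ • y ∈ Metric.sphere (0 : EuclideanSpace ℝ (Fin d)) 1 := by
        simp only [Metric.mem_sphere, dist_zero_right]
        rw [norm_smul, norm_inv, norm_norm]
        exact inv_mul_cancel₀ (norm_ne_zero_iff.mpr hy)
      have hzle := hzmin hmem
      have heq : N y = ‖y‖ * N (‖y‖⁻¹ • y) := by
        rw [hNsmul, abs_inv, abs_of_pos hy0]
        field_simp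
      rw [heq]
      have : N z ≤ N (‖y‖⁻¹ • y) := hzle
      nlinarith
  have hmC : m ≤ C := by
    have h1 := hmlb (EuclideanSpace.single ⟨0, hd⟩ (1:ℝ))
    have h2 := hCub (EuclideanSpace.single ⟨0, hd⟩ (1:ℝ))
    have h3 : ‖EuclideanSpace.single (⟨0, hd⟩ : Fin d) (1:ℝ)‖ = 1 := by
      simp [EuclideanSpace.norm_single]
    rw [h3] at h1 h2
    linarith
  -- measure of the unit N-ball
  obtain ⟨V, hV⟩ : ∃ V : ℝ≥0∞, V = volume {y : EuclideanSpace ℝ (Fin d) | N y ≤ 1} := ⟨_, rfl⟩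
  have hVpos : 0 < V := by
    rw [hV]
    refine lt_of_lt_of_le (Metric.measure_closedBall_pos volume (0 : EuclideanSpace ℝ (Fin d))
      (one_div_pos.mpr hCpos)) (measure_mono ?_)
    intro y hy
    simp only [Metric.mem_closedBall, dist_zero_right] at hy
    simp only [Set.mem_setOf_eq]
    calc N y ≤ C * ‖y‖ := hCub y
      _ ≤ C * (1/C) := mul_le_mul_of_nonneg_left hy hCpos.le
      _ = 1 := by field_simp
  have hVlt : V < ⊤ := by
    rw [hV]
    refine lt_of_le_of_lt (measure_mono (show {y : EuclideanSpace ℝ (Fin d) | N y ≤ 1} ⊆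
      Metric.closedBall 0 (1/m) from ?_)) measure_closedBall_lt_top
    intro y hy
    simp only [Set.mem_setOf_eq] at hy
    simp only [Metric.mem_closedBall, dist_zero_right]
    rw [le_div_iff₀ hmpos]
    have := hmlb y
    linarith [mul_comm m ‖y‖]
  have hvdpos : 0 < vd := by
    rw [hvd, ← hV]
    exact ENNReal.toReal_pos hVpos.ne' hVlt.ne
  have hVeq : ENNReal.ofReal vd = V := by
    rw [hvd, ← hV]
    exact ENNReal.ofReal_toReal hVlt.ne
  -- volume of N-balls
  have hball : ∀ (x : EuclideanSpace ℝ (Fin d)) (r : ℝ), 0 < r →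
      volume {y : EuclideanSpace ℝ (Fin d) | N (y - x) ≤ r} = ENNReal.ofReal (r ^ d) * V := by
    intro x r hr
    have hset : {y : EuclideanSpace ℝ (Fin d) | N (y - x) ≤ r}
        = x +ᵥ r • {y : EuclideanSpace ℝ (Fin d) | N y ≤ 1} := by
      ext y
      rw [Set.mem_vadd_set_iff_neg_vadd_mem, Set.mem_smul_set_iff_inv_smul_mem₀ hr.ne']
      simp only [Set.mem_setOf_eq, vadd_eq_add, neg_add_eq_sub, hNsmul, abs_inv,
        abs_of_pos hr]
      rw [inv_mul_le_iff₀ hr, mul_one]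
    rw [hset, measure_vadd, Measure.addHaar_smul, finrank_euclideanSpace_fin,
      abs_of_nonneg (pow_nonneg hr.le d), hV]
  -- density facts
  have hpcont : Continuous p := by
    have : p = fun y => h ‖y - x₀‖ := funext hp
    rw [this]
    exact hcont.comp ((continuous_id.sub continuous_const).norm)
  have hppos : ∀ y, 0 < p y := fun y => by
    rw [hp]; exact hpos _ (norm_nonneg _)
  -- lower bound for ν on measurable sets where p is bounded below
  have hnu : ∀ (S : Set (EuclideanSpace ℝ (Fin d))), MeasurableSet S → ∀ c : ℝ,
      (∀ y ∈ S, c ≤ p y) → ENNReal.ofReal c * volume S ≤ ν S := by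
    intro S hS c hc
    rw [hν, withDensity_apply _ hS]
    calc ENNReal.ofReal c * volume S = ∫⁻ _ in S, ENNReal.ofReal c ∂volume :=
        (setLIntegral_const S _).symm
      _ ≤ ∫⁻ y in S, ENNReal.ofReal (p y) ∂volume :=
        setLIntegral_mono (hpcont.measurable.ennreal_ofReal)
          (fun y hy => ENNReal.ofReal_le_ofReal (hc y hy))
  -- constants
  obtain ⟨ω, hω⟩ : ∃ ω : ℝ≥0∞,
      ω = volume (Metric.closedBall (0 : EuclideanSpace ℝ (Fin d)) 1) := ⟨_, rfl⟩
  have hωpos : 0 < ω := hω ▸ Metric.measure_closedBall_pos volume _ one_pos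
  have hωlt : ω < ⊤ := hω ▸ measure_closedBall_lt_top
  have hωR : 0 < ω.toReal := ENNReal.toReal_pos hωpos.ne' hωlt.ne
  obtain ⟨s0, hs0⟩ : ∃ s0 : ℝ, s0 = 1 / (4 * C) := ⟨_, rfl⟩
  have hs0pos : 0 < s0 := by
    rw [hs0]
    exact one_div_pos.mpr (by linarith)
  have hκ1pos : 0 < h (2 / m) / h 0 :=
    div_pos (hpos _ (div_nonneg two_pos.le hmpos.le)) (hpos 0 le_rfl)
  have hκ2pos : 0 < s0 ^ d * ω.toReal / vd :=
    div_pos (mul_pos (pow_pos hs0pos d) hωR) hvdpos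
  obtain ⟨κ, hκ⟩ : ∃ κ : ℝ,
      κ = min (min (h (2 / m) / h 0) (s0 ^ d * ω.toReal / vd)) 1 := ⟨_, rfl⟩
  have hκpos : 0 < κ := hκ ▸ lt_min (lt_min hκ1pos hκ2pos) one_pos
  have hκle1 : κ ≤ 1 := hκ ▸ min_le_right _ _
  have hκ1 : κ ≤ h (2 / m) / h 0 := hκ ▸ le_trans (min_le_left _ _) (min_le_left _ _)
  have hκ2 : κ ≤ s0 ^ d * ω.toReal / vd := hκ ▸ le_trans (min_le_left _ _) (min_le_right _ _)
  refine ⟨κ, ⟨hκpos, hκle1⟩, 1, one_pos, ?_⟩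
  intro x r hr
  obtain rfl | hr0 := (hr.1).eq_or_lt
  · simp [zero_pow (by omega : d ≠ 0)]
  have hr1 : r ≤ 1 := hr.2
  have hSmeas : MeasurableSet {y : EuclideanSpace ℝ (Fin d) | N (y - x) ≤ r} :=
    (isClosed_le (hNcont.comp (continuous_id.sub continuous_const)) continuous_const).measurableSet
  by_cases hfar : 1 / m ≤ ‖x - x₀‖
  · -- far case: use a small Euclidean ball inside the cone towards x₀
    have hwne : x₀ - x ≠ 0 := by
      intro hc
      have hxz : ‖x - x₀‖ = 0 := by
        rw [← norm_neg]
        simp [neg_sub, hc]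
      rw [hxz] at hfar
      have : (0:ℝ) < 1 / m := one_div_pos.mpr hmpos
      linarith
    obtain ⟨e, he_def⟩ : ∃ e : EuclideanSpace ℝ (Fin d), e = ‖x₀ - x‖⁻¹ • (x₀ - x) := ⟨_, rfl⟩
    have he : ‖e‖ = 1 := by
      rw [he_def, norm_smul, norm_inv, norm_norm]
      exact inv_mul_cancel₀ (norm_ne_zero_iff.mpr hwne)
    have hew : ⟪e, x₀ - x⟫ = ‖x₀ - x‖ := by
      rw [he_def, real_inner_smul_left, real_inner_self_eq_norm_sq, sq, ← mul_assoc,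
        inv_mul_cancel₀ (norm_ne_zero_iff.mpr hwne), one_mul]
    obtain ⟨A, hA⟩ : ∃ A : Set (EuclideanSpace ℝ (Fin d)),
        A = Metric.closedBall (x + (3 * (s0 * r)) • e) (s0 * r) := ⟨_, rfl⟩
    have hsr : 0 < s0 * r := mul_pos hs0pos hr0
    -- members of A are close to x
    have hAnorm : ∀ y ∈ A, ‖y - x - (3 * (s0 * r)) • e‖ ≤ s0 * r ∧ ‖y - x‖ ≤ 4 * (s0 * r) := by
      intro y hy
      rw [hA] at hy
      have h1 : ‖y - (x + (3 * (s0 * r)) • e)‖ ≤ s0 * r := by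
        rw [← dist_eq_norm]; exact hy
      have heq : y - (x + (3 * (s0 * r)) • e) = y - x - (3 * (s0 * r)) • e := by abel
      rw [heq] at h1
      refine ⟨h1, ?_⟩
      have h2 : ‖(3 * (s0 * r)) • e‖ = 3 * (s0 * r) := by
        rw [norm_smul, he, Real.norm_eq_abs, abs_of_pos (by linarith : (0:ℝ) < 3 * (s0 * r))]
        ring
      calc ‖y - x‖ = ‖(y - x - (3 * (s0 * r)) • e) + (3 * (s0 * r)) • e‖ := by abel_nf
        _ ≤ ‖y - x - (3 * (s0 * r)) • e‖ + ‖(3 * (s0 * r)) • e‖ := norm_add_le _ _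
        _ ≤ s0 * r + 3 * (s0 * r) := by rw [h2]; linarith
        _ = 4 * (s0 * r) := by ring
    have hAS : A ⊆ {y : EuclideanSpace ℝ (Fin d) | N (y - x) ≤ r} := by
      intro y hy
      obtain ⟨-, h2⟩ := hAnorm y hy
      simp only [Set.mem_setOf_eq]
      calc N (y - x) ≤ C * ‖y - x‖ := hCub _
        _ ≤ C * (4 * (s0 * r)) := mul_le_mul_of_nonneg_left h2 hCpos.le
        _ = (4 * s0 * C) * r := by ring
        _ = r := by
            rw [hs0]
            field_simp
    have hpA : ∀ y ∈ A, p x ≤ p y := by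
      intro y hy
      obtain ⟨h1, h2⟩ := hAnorm y hy
      have hwnorm : ‖x₀ - x‖ = ‖x - x₀‖ := norm_sub_rev _ _
      have hwge : 1 / m ≤ ‖x₀ - x‖ := by rw [hwnorm]; exact hfar
      -- inner product bound
      have hinner : ‖y - x‖ * ‖x₀ - x‖ / 2 ≤ ⟪y - x, x₀ - x⟫ := by
        have hsplit : ⟪y - x, x₀ - x⟫
            = ⟪y - x - (3 * (s0 * r)) • e, x₀ - x⟫ + 3 * (s0 * r) * ‖x₀ - x‖ := by
          rw [inner_sub_left (y - x), real_inner_smul_left, hew]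
          ring
        have habs : |⟪y - x - (3 * (s0 * r)) • e, x₀ - x⟫| ≤ (s0 * r) * ‖x₀ - x‖ :=
          le_trans (abs_real_inner_le_norm _ _) (mul_le_mul_of_nonneg_right h1 (norm_nonneg _))
        have hlow : -((s0 * r) * ‖x₀ - x‖) ≤ ⟪y - x - (3 * (s0 * r)) • e, x₀ - x⟫ :=
          neg_le_of_abs_le habs
        have h2' : 2 * (s0 * r) * ‖x₀ - x‖ ≤ ⟪y - x, x₀ - x⟫ := by
          rw [hsplit]; nlinarith [norm_nonneg (x₀ - x)]
        nlinarith [norm_nonneg (x₀ - x)]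
      have huw : ‖y - x‖ ≤ ‖x₀ - x‖ := by
        have h4s : 4 * (s0 * r) ≤ 1 / m := by
          have he1 : 4 * s0 = 1 / C := by rw [hs0]; field_simp
          have h4 : 4 * (s0 * r) ≤ 4 * s0 := by nlinarith
          have h5 : 1 / C ≤ 1 / m := one_div_le_one_div_of_le hmpos hmC
          linarith
        linarith
      have hsq : ‖(y - x) - (x₀ - x)‖ ^ 2 ≤ ‖x₀ - x‖ ^ 2 := by
        rw [norm_sub_sq_real]
        nlinarith [norm_nonneg (y - x), norm_nonneg (x₀ - x)]
      have hle : ‖(y - x) - (x₀ - x)‖ ≤ ‖x₀ - x‖ := by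
        nlinarith [norm_nonneg ((y - x) - (x₀ - x)), norm_nonneg (x₀ - x)]
      have hyx : y - x₀ = (y - x) - (x₀ - x) := by abel
      rw [hp x, hp y, hyx, ← hwnorm]
      exact hanti (Set.mem_Ici.mpr (norm_nonneg _)) (Set.mem_Ici.mpr (norm_nonneg _)) hle
    -- conclude the far case
    have hvolA : volume A = ENNReal.ofReal ((s0 * r) ^ d) * ω := by
      rw [hA, Measure.addHaar_closedBall' volume _ hsr.le, finrank_euclideanSpace_fin, hω]
    have hAmeas : MeasurableSet A := by
      rw [hA]; exact Metric.isClosed_closedBall.measurableSet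
    have step1 : ENNReal.ofReal (p x) * volume A ≤ ν A := hnu A hAmeas (p x) hpA
    have step2 : ν A ≤ ν {y : EuclideanSpace ℝ (Fin d) | N (y - x) ≤ r} :=
      measure_mono hAS
    refine le_trans ?_ (le_trans step1 step2)
    rw [hvolA, ← ENNReal.ofReal_toReal hωlt.ne, ← ENNReal.ofReal_mul (pow_nonneg hsr.le d),
      ← ENNReal.ofReal_mul (hppos x).le]
    apply ENNReal.ofReal_le_ofReal
    have hkey : κ * vd ≤ s0 ^ d * ω.toReal := by
      rw [le_div_iff₀ hvdpos] at hκ2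
      exact hκ2
    calc κ * p x * vd * r ^ d = (κ * vd) * (p x * r ^ d) := by ring
      _ ≤ (s0 ^ d * ω.toReal) * (p x * r ^ d) :=
          mul_le_mul_of_nonneg_right hkey (mul_nonneg (hppos x).le (pow_nonneg hr0.le d))
      _ = p x * ((s0 * r) ^ d * ω.toReal) := by rw [mul_pow]; ring
  · -- near case
    push_neg at hfar
    have hpS : ∀ y ∈ {y : EuclideanSpace ℝ (Fin d) | N (y - x) ≤ r}, h (2 / m) ≤ p y := by
      intro y hy
      simp only [Set.mem_setOf_eq] at hy
      have h1 : ‖y - x‖ ≤ 1 / m := by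
        rw [le_div_iff₀ hmpos]
        have := hmlb (y - x)
        have h2 : ‖y - x‖ * m = m * ‖y - x‖ := mul_comm _ _
        linarith
      have h2 : ‖y - x₀‖ ≤ 2 / m := by
        calc ‖y - x₀‖ = ‖(y - x) + (x - x₀)‖ := by abel_nf
          _ ≤ ‖y - x‖ + ‖x - x₀‖ := norm_add_le _ _
          _ ≤ 1 / m + 1 / m := by linarith
          _ = 2 / m := by ring
      rw [hp y]
      exact hanti (Set.mem_Ici.mpr (norm_nonneg _))
        (Set.mem_Ici.mpr (div_nonneg two_pos.le hmpos.le)) h2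
    have step1 : ENNReal.ofReal (h (2 / m)) * volume {y : EuclideanSpace ℝ (Fin d) | N (y - x) ≤ r}
        ≤ ν {y : EuclideanSpace ℝ (Fin d) | N (y - x) ≤ r} := hnu _ hSmeas _ hpS
    refine le_trans ?_ step1
    rw [hball x r hr0, ← hVeq, ← ENNReal.ofReal_mul (pow_nonneg hr0.le d),
      ← ENNReal.ofReal_mul (hpos _ (div_nonneg two_pos.le hmpos.le)).le]
    apply ENNReal.ofReal_le_ofReal
    have hpx : p x ≤ h 0 := by
      rw [hp x]
      exact hanti (Set.mem_Ici.mpr le_rfl) (Set.mem_Ici.mpr (norm_nonneg _)) (norm_nonneg _)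
    have hkey : κ * p x ≤ h (2 / m) := by
      calc κ * p x ≤ (h (2 / m) / h 0) * h 0 :=
            mul_le_mul hκ1 hpx (hppos x).le hκ1pos.le
        _ = h (2 / m) := div_mul_cancel₀ _ (hpos 0 le_rfl).ne'
    calc κ * p x * vd * r ^ d = (κ * p x) * (vd * r ^ d) := by ring
      _ ≤ h (2 / m) * (vd * r ^ d) :=
          mul_le_mul_of_nonneg_right hkey (mul_nonneg hvdpos.le (pow_nonneg hr0.le d))
      _ = h (2 / m) * (r ^ d * vd) := by ring
end

section
/- Let w_j^{(k)} = (m/(kn)) ∑_{i=1}^n ∑_{l=1}^k 1{X'_j is the l-th nearest neighbor of X_i}. Then ∑_{j=1}^m (w_j^{(k)})² ≤ m²/k. -/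
open scoped BigOperators

/-- The sum of squares of the `k`-NN weights is at most `m²/k`. -/
theorem stmt15 {n m k : ℕ} (hn : 0 < n) (hk : 1 ≤ k) (hkm : k ≤ m)
    (nn : Fin n → Fin m → Fin m)
    (hbij : ∀ i, Function.Bijective (nn i))
    (w : Fin m → ℝ)
    (hw : ∀ j, w j = (m : ℝ) / (k * n) *
      ∑ i, ((Finset.univ.filter fun l : Fin m => (l : ℕ) < k ∧ nn i l = j).card : ℝ)) :
    ∑ j, w j ^ 2 ≤ (m : ℝ) ^ 2 / k := by
  classical
  set c : Fin n → Fin m → ℕ := fun i j =>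
    (Finset.univ.filter fun l : Fin m => (l : ℕ) < k ∧ nn i l = j).card with hc
  have hc1 : ∀ i j, c i j ≤ 1 := by
    intro i j
    apply Finset.card_le_one.mpr
    intro a ha b hb
    simp only [Finset.mem_filter, Finset.mem_univ, true_and] at ha hb
    exact (hbij i).1 (ha.2.trans hb.2.symm)
  have hsum : ∀ i, ∑ j, c i j = k := by
    intro i
    have h1 : (Finset.univ.filter fun l : Fin m => (l : ℕ) < k).card
        = ∑ j, ((Finset.univ.filter fun l : Fin m => (l : ℕ) < k).filter
          fun l => nn i l = j).card := by
      exact Finset.card_eq_sum_card_fiberwise (fun x _ => Finset.mem_univ _)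
    have h2 : ∀ j, ((Finset.univ.filter fun l : Fin m => (l : ℕ) < k).filter
        fun l => nn i l = j) = (Finset.univ.filter fun l : Fin m => (l : ℕ) < k ∧ nn i l = j) := by
      intro j
      rw [Finset.filter_filter]
    have h3 : (Finset.univ.filter fun l : Fin m => (l : ℕ) < k).card = k := by
      rw [← Fintype.card_subtype]
      have : Fintype.card {l : Fin m // (l : ℕ) < k} = Fintype.card (Fin k) := by
        apply Fintype.card_congr
        exact ⟨fun x => ⟨x.1, x.2⟩, fun x => ⟨⟨x.1, lt_of_lt_of_le x.2 hkm⟩, x.2⟩,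
          fun x => rfl, fun x => rfl⟩
      simpa using this
    simp only [hc]
    calc ∑ j, c i j = ∑ j : Fin m, (Finset.filter (fun l => nn i l = j) (Finset.filter (fun l => (l:ℕ) < k) Finset.univ)).card := Finset.sum_congr rfl fun j _ => by rw [h2 j]
      _ = k := by rw [← h1, h3]
  have hwj : ∀ j, w j = (m : ℝ) / (k * n) * ∑ i, (c i j : ℝ) := hw
  have key : ∑ j, (∑ i, (c i j : ℝ)) ^ 2 ≤ (n : ℝ) ^ 2 * k := by
    calc ∑ j, (∑ i, (c i j : ℝ)) ^ 2
        ≤ ∑ j : Fin m, (n : ℝ) * ∑ i, (c i j : ℝ) ^ 2 := by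
          apply Finset.sum_le_sum
          intro j _
          simpa using sq_sum_le_card_mul_sum_sq (s := Finset.univ) (f := fun i => (c i j : ℝ))
      _ ≤ ∑ j : Fin m, (n : ℝ) * ∑ i, (c i j : ℝ) := by
          apply Finset.sum_le_sum
          intro j _
          apply mul_le_mul_of_nonneg_left _ (by positivity)
          apply Finset.sum_le_sum
          intro i _
          have h1 : (c i j : ℝ) ≤ 1 := by exact_mod_cast hc1 i j
          nlinarith [Nat.cast_nonneg (α := ℝ) (c i j)]
      _ = (n : ℝ) * ∑ i : Fin n, ∑ j : Fin m, (c i j : ℝ) := by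
          rw [← Finset.mul_sum, Finset.sum_comm]
      _ = (n : ℝ) ^ 2 * k := by
          have : ∀ i : Fin n, ∑ j : Fin m, (c i j : ℝ) = (k : ℝ) := by
            intro i
            rw [← Nat.cast_sum, hsum i]
          simp [this]
          ring
  have hn' : (0:ℝ) < n := by exact_mod_cast hn
  have hk' : (0:ℝ) < k := by exact_mod_cast hk
  calc ∑ j, w j ^ 2 = ((m : ℝ) / (k * n)) ^ 2 * ∑ j, (∑ i, (c i j : ℝ)) ^ 2 := by
        rw [Finset.mul_sum]
        exact Finset.sum_congr rfl fun j _ => by rw [hwj j, mul_pow]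
    _ ≤ ((m : ℝ) / (k * n)) ^ 2 * ((n : ℝ) ^ 2 * k) := by
        apply mul_le_mul_of_nonneg_left key (by positivity)
    _ = (m : ℝ) ^ 2 / k := by field_simp
end
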